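/- Let φ : ℝ → ℝ be L_φ-Lipschitz with φ(0) = c, and let f : ℝ^{p×d} → ℝ^p satisfy Σ_{m=1}^p |f(W)_m| ≤ B for all W in a parameter class C. Let RS(C) denote the set of all row vectors of matrices in C, enlarged to contain 0. Then for fixed points z₁,…,z_N ∈ ℝ^d, E_ε[ sup_{W∈C} (1/N) Σᵢ εᵢ ⟨f(W), φ(W zᵢ)⟩ ] ≤ (2 B L_φ / N) E_ε[ sup_{w̄∈RS(C)} Σᵢ εᵢ ⟨w̄, zᵢ⟩ ] + B|c|/√N, where φ(Wz) denotes coordinatewise application of φ to the vector Wz and ε are i.i.d. Rademacher variables. -/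

import Mathlib

open Finset

/-- Expectation over i.i.d. Rademacher signs `ε : Fin n → {−1,1}`. -/
noncomputable def expSign (n : ℕ) (F : (Fin n → ℝ) → ℝ) : ℝ :=
  (∑ b : Fin n → Bool, F (fun i => if b i then 1 else -1)) / 2 ^ n

namespace StmtAux

lemma expSign_mono {n : ℕ} {F G : (Fin n → ℝ) → ℝ}
    (h : ∀ b : Fin n → Bool,
      F (fun i => if b i then 1 else -1) ≤ G (fun i => if b i then 1 else -1)) :
    expSign n F ≤ expSign n G := by
  unfold expSign
  gcongr with b hb
  · exact h b

lemma expSign_add {n : ℕ} (F G : (Fin n → ℝ) → ℝ) :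
    expSign n (fun s => F s + G s) = expSign n F + expSign n G := by
  simp [expSign, Finset.sum_add_distrib, add_div]

lemma expSign_const_mul {n : ℕ} (a : ℝ) (F : (Fin n → ℝ) → ℝ) :
    expSign n (fun s => a * F s) = a * expSign n F := by
  simp [expSign, ← Finset.mul_sum, mul_div_assoc]

lemma expSign_const {n : ℕ} (a : ℝ) : expSign n (fun _ => a) = a := by
  rw [expSign, Finset.sum_const, Finset.card_univ]
  simp only [nsmul_eq_mul]
  rw [div_eq_iff (by positivity : (2:ℝ) ^ n ≠ 0)]
  simp [Fintype.card_fun]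
  ring

lemma expSign_neg_comp {n : ℕ} (F : (Fin n → ℝ) → ℝ) :
    expSign n (fun s => F (fun i => -(s i))) = expSign n F := by
  unfold expSign
  congr 1
  have hinv : Function.Involutive (fun b : Fin n → Bool => fun i => !(b i)) := by
    intro b; funext i; simp
  have := Equiv.sum_comp (hinv.toPerm _)
    (fun b : Fin n → Bool => F (fun i => if b i then 1 else -1))
  rw [← this]
  apply Finset.sum_congr rfl
  intro b _
  show F _ = F _
  congr 1
  funext i
  show -(if b i = true then (1:ℝ) else -1) = _
  simp only [Function.Involutive.coe_toPerm]
  by_cases hb : b i <;> simp [hb]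


lemma sup_step {α : Type*} [Nonempty α] (A h' g : α → ℝ) (L t : ℝ)
    (ht : t = 1 ∨ t = -1)
    (hlip : ∀ x y : α, |h' x - h' y| ≤ L * |g x - g y|)
    (b1 : BddAbove (Set.range fun a => A a + t * (L * g a)))
    (b2 : BddAbove (Set.range fun a => A a - t * (L * g a))) :
    sSup (Set.range fun a => A a + t * h' a) + sSup (Set.range fun a => A a - t * h' a)
      ≤ sSup (Set.range fun a => A a + t * (L * g a))
        + sSup (Set.range fun a => A a - t * (L * g a)) := by
  have key : ∀ a a' : α, (A a + t * h' a) + (A a' - t * h' a')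
      ≤ sSup (Set.range fun a => A a + t * (L * g a))
        + sSup (Set.range fun a => A a - t * (L * g a)) := by
    intro a a'
    have hl := hlip a a'
    have hl1 := (abs_le.mp hl).2
    have hl2 := (abs_le.mp hl).1
    rcases ht with rfl | rfl <;> rcases le_total (g a') (g a) with hg | hg
    · have habs : |g a - g a'| = g a - g a' := abs_of_nonneg (by linarith)
      have e1 := le_csSup b1 (Set.mem_range_self a)
      have e2 := le_csSup b2 (Set.mem_range_self a')
      simp only [habs] at hl1 hl2
      linarith
    · have habs : |g a - g a'| = g a' - g a := by
        rw [abs_sub_comm]; exact abs_of_nonneg (by linarith)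
      have e1 := le_csSup b1 (Set.mem_range_self a')
      have e2 := le_csSup b2 (Set.mem_range_self a)
      simp only [habs] at hl1 hl2
      linarith
    · have habs : |g a - g a'| = g a - g a' := abs_of_nonneg (by linarith)
      have e1 := le_csSup b1 (Set.mem_range_self a')
      have e2 := le_csSup b2 (Set.mem_range_self a)
      simp only [habs] at hl1 hl2
      linarith
    · have habs : |g a - g a'| = g a' - g a := by
        rw [abs_sub_comm]; exact abs_of_nonneg (by linarith)
      have e1 := le_csSup b1 (Set.mem_range_self a)
      have e2 := le_csSup b2 (Set.mem_range_self a')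
      simp only [habs] at hl1 hl2
      linarith
  have step1 : sSup (Set.range fun a => A a + t * h' a)
      ≤ (sSup (Set.range fun a => A a + t * (L * g a))
          + sSup (Set.range fun a => A a - t * (L * g a)))
        - sSup (Set.range fun a => A a - t * h' a) := by
    apply csSup_le (Set.range_nonempty _)
    rintro x ⟨a, rfl⟩
    have h2 : sSup (Set.range fun a' => A a' - t * h' a')
        ≤ (sSup (Set.range fun a => A a + t * (L * g a))
            + sSup (Set.range fun a => A a - t * (L * g a)))
          - (A a + t * h' a) := by
      apply csSup_le (Set.range_nonempty _)
      rintro y ⟨a', rfl⟩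
      have := key a a'
      simp only at this ⊢
      linarith
    simp only at h2 ⊢
    linarith
  linarith

lemma exp_step {n : ℕ} {α : Type*} [Nonempty α] (u v : Fin n → α → ℝ) (k : Fin n)
    (L : ℝ) (g : α → ℝ)
    (huv : ∀ i, i ≠ k → u i = v i)
    (hlip : ∀ x y : α, |u k x - u k y| ≤ L * |g x - g y|)
    (hv : ∀ a, v k a = L * g a)
    (bddv : ∀ b : Fin n → Bool,
      BddAbove (Set.range fun a => ∑ i, (if b i then (1:ℝ) else -1) * v i a)) :
    expSign n (fun s => sSup (Set.range fun a => ∑ i, s i * u i a))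
      ≤ expSign n (fun s => sSup (Set.range fun a => ∑ i, s i * v i a)) := by
  classical
  set Gu : (Fin n → Bool) → ℝ := fun b =>
    sSup (Set.range fun a => ∑ i, (if b i then (1:ℝ) else -1) * u i a) with hGu
  set Gv : (Fin n → Bool) → ℝ := fun b =>
    sSup (Set.range fun a => ∑ i, (if b i then (1:ℝ) else -1) * v i a) with hGv
  have main : ∑ b : Fin n → Bool, Gu b ≤ ∑ b : Fin n → Bool, Gv b := by
    set flip : (Fin n → Bool) → (Fin n → Bool) := fun b => Function.update b k (!(b k)) with hflip
    have hinv : Function.Involutive flip := by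
      intro b; funext i
      by_cases hik : i = k
      · subst hik; simp [flip]
      · simp [flip, Function.update_of_ne hik]
    have pair : ∀ b : Fin n → Bool, Gu b + Gu (flip b) ≤ Gv b + Gv (flip b) := by
      intro b
      set s : Fin n → ℝ := fun i => if b i then 1 else -1 with hs
      set s' : Fin n → ℝ := fun i => if flip b i then 1 else -1 with hs'
      have hs'eq : ∀ i, i ≠ k → s' i = s i := by
        intro i hik; simp [hs', hs, flip, Function.update_of_ne hik]
      have hs'k : s' k = -(s k) := by
        by_cases hb : b k <;> simp [hs', hs, flip, hb]
      set A : α → ℝ := fun a => ∑ i ∈ Finset.univ.erase k, s i * u i a with hA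
      have hAu : ∀ (t : Fin n → ℝ), (∀ i, i ≠ k → t i = s i) →
          ∀ a, ∑ i, t i * u i a = A a + t k * u k a := by
        intro t htt a
        rw [hA]
        rw [← Finset.sum_erase_add Finset.univ _ (Finset.mem_univ k)]
        congr 1
        apply Finset.sum_congr rfl
        intro i hi
        rw [htt i (Finset.ne_of_mem_erase hi)]
      have hAv : ∀ (t : Fin n → ℝ), (∀ i, i ≠ k → t i = s i) →
          ∀ a, ∑ i, t i * v i a = A a + t k * (L * g a) := by
        intro t htt a
        rw [hA]
        rw [← Finset.sum_erase_add Finset.univ _ (Finset.mem_univ k)]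
        rw [hv a]
        congr 1
        apply Finset.sum_congr rfl
        intro i hi
        rw [htt i (Finset.ne_of_mem_erase hi), huv i (Finset.ne_of_mem_erase hi)]
      have hf1 : (fun a : α => ∑ i, s i * u i a) = fun a => A a + s k * u k a :=
        funext fun a => hAu s (fun _ _ => rfl) a
      have hf2 : (fun a : α => ∑ i, s' i * u i a) = fun a => A a - s k * u k a := by
        funext a
        have h0 : ∑ i, s' i * u i a = A a + s' k * u k a := hAu s' hs'eq a
        rw [hs'k] at h0
        rw [h0]; ring
      have hf3 : (fun a : α => ∑ i, s i * v i a) = fun a => A a + s k * (L * g a) :=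
        funext fun a => hAv s (fun _ _ => rfl) a
      have hf4 : (fun a : α => ∑ i, s' i * v i a) = fun a => A a - s k * (L * g a) := by
        funext a
        have h0 : ∑ i, s' i * v i a = A a + s' k * (L * g a) := hAv s' hs'eq a
        rw [hs'k] at h0
        rw [h0]; ring
      have e1 : Gu b = sSup (Set.range fun a => A a + s k * u k a) :=
        congrArg (fun F : α → ℝ => sSup (Set.range F)) hf1
      have e2 : Gu (flip b) = sSup (Set.range fun a => A a - s k * u k a) :=
        congrArg (fun F : α → ℝ => sSup (Set.range F)) hf2
      have e3 : Gv b = sSup (Set.range fun a => A a + s k * (L * g a)) :=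
        congrArg (fun F : α → ℝ => sSup (Set.range F)) hf3
      have e4 : Gv (flip b) = sSup (Set.range fun a => A a - s k * (L * g a)) :=
        congrArg (fun F : α → ℝ => sSup (Set.range F)) hf4
      have b1 : BddAbove (Set.range fun a => A a + s k * (L * g a)) := by
        have hbv := bddv b
        rwa [congrArg Set.range hf3] at hbv
      have b2 : BddAbove (Set.range fun a => A a - s k * (L * g a)) := by
        have hbv := bddv (flip b)
        rwa [congrArg Set.range hf4] at hbv
      have htk : s k = 1 ∨ s k = -1 := by
        by_cases hb : b k <;> simp [hs, hb]
      rw [e1, e2, e3, e4]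
      exact sup_step A (u k) g L (s k) htk hlip b1 b2
    have hflipsum : ∀ (G : (Fin n → Bool) → ℝ),
        ∑ b : Fin n → Bool, G (flip b) = ∑ b : Fin n → Bool, G b :=
      fun G => Equiv.sum_comp (hinv.toPerm flip) G
    have h2 : (2:ℝ) * ∑ b : Fin n → Bool, Gu b ≤ 2 * ∑ b : Fin n → Bool, Gv b := by
      calc (2:ℝ) * ∑ b : Fin n → Bool, Gu b
          = ∑ b : Fin n → Bool, (Gu b + Gu (flip b)) := by
            rw [Finset.sum_add_distrib, hflipsum Gu]; ring
        _ ≤ ∑ b : Fin n → Bool, (Gv b + Gv (flip b)) := Finset.sum_le_sum fun b _ => pair b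
        _ = 2 * ∑ b : Fin n → Bool, Gv b := by
            rw [Finset.sum_add_distrib, hflipsum Gv]; ring
    linarith
  unfold expSign
  gcongr

lemma sum_sign_sq (n : ℕ) :
    ∑ b : Fin n → Bool, (∑ i, (if b i then (1:ℝ) else -1)) ^ 2 = 2 ^ n * n := by
  classical
  have expand : ∀ b : Fin n → Bool, (∑ i, (if b i then (1:ℝ) else -1)) ^ 2
      = ∑ i, ∑ j, (if b i then (1:ℝ) else -1) * (if b j then (1:ℝ) else -1) := by
    intro b
    rw [sq, Finset.sum_mul_sum]
  simp_rw [expand]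
  rw [Finset.sum_comm]
  have inner : ∀ i : Fin n, ∑ b : Fin n → Bool, ∑ j,
      (if b i then (1:ℝ) else -1) * (if b j then (1:ℝ) else -1) = 2 ^ n := by
    intro i
    rw [Finset.sum_comm]
    have hdiag : ∑ b : Fin n → Bool,
        (if b i then (1:ℝ) else -1) * (if b i then (1:ℝ) else -1) = 2 ^ n := by
      have : ∀ b : Fin n → Bool,
          (if b i then (1:ℝ) else -1) * (if b i then (1:ℝ) else -1) = 1 := by
        intro b; by_cases hb : b i <;> simp [hb]
      simp_rw [this]
      simp [Finset.card_univ]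
    have hoff : ∀ j : Fin n, j ≠ i → ∑ b : Fin n → Bool,
        (if b i then (1:ℝ) else -1) * (if b j then (1:ℝ) else -1) = 0 := by
      intro j hj
      set flip : (Fin n → Bool) → (Fin n → Bool) := fun b => Function.update b j (!(b j)) with hflip
      have hinv : Function.Involutive flip := by
        intro b; funext m
        by_cases hm : m = j
        · subst hm; simp [flip]
        · simp [flip, Function.update_of_ne hm]
      set G : (Fin n → Bool) → ℝ :=
        fun b => (if b i then (1:ℝ) else -1) * (if b j then (1:ℝ) else -1) with hG
      have hneg : ∀ b, G (flip b) = -(G b) := by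
        intro b
        have h1 : flip b i = b i := Function.update_of_ne (Ne.symm hj) _ _
        have h2 : flip b j = !(b j) := Function.update_self _ _ _
        show (if flip b i then (1:ℝ) else -1) * (if flip b j then (1:ℝ) else -1) = _
        rw [h1, h2]
        by_cases hb : b j <;> by_cases hbi : b i <;> simp [G, hb, hbi]
      have hsum : ∑ b : Fin n → Bool, G (flip b) = ∑ b : Fin n → Bool, G b :=
        Equiv.sum_comp (hinv.toPerm flip) G
      have : ∑ b : Fin n → Bool, G b = -∑ b : Fin n → Bool, G b := by
        conv_lhs => rw [← hsum]
        simp_rw [hneg]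
        rw [Finset.sum_neg_distrib]
      linarith
    rw [← Finset.sum_erase_add _ _ (Finset.mem_univ i)]
    rw [Finset.sum_eq_zero (fun j hj => hoff j (Finset.ne_of_mem_erase hj)), hdiag]
    ring
  simp_rw [inner]
  simp [Finset.card_univ]
  ring

lemma expSign_abs_sum_le (n : ℕ) :
    expSign n (fun s => |∑ i, s i|) ≤ Real.sqrt n := by
  unfold expSign
  rw [div_le_iff₀ (by positivity : (0:ℝ) < 2 ^ n)]
  have cs : (∑ b : Fin n → Bool, |∑ i, (if b i then (1:ℝ) else -1)| * 1) ^ 2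
      ≤ (∑ b : Fin n → Bool, |∑ i, (if b i then (1:ℝ) else -1)| ^ 2)
        * ∑ _b : Fin n → Bool, (1:ℝ) ^ 2 :=
    Finset.sum_mul_sq_le_sq_mul_sq _ _ _
  simp only [mul_one, one_pow, sq_abs] at cs
  rw [sum_sign_sq] at cs
  have h1 : ∑ _b : Fin n → Bool, (1:ℝ) = 2 ^ n := by
    simp [Finset.card_univ]
  rw [h1] at cs
  have hnn : 0 ≤ ∑ b : Fin n → Bool, |∑ i, (if b i then (1:ℝ) else -1)| :=
    Finset.sum_nonneg fun _ _ => abs_nonneg _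
  have key : (2:ℝ) ^ n * n * 2 ^ n = (Real.sqrt n * 2 ^ n) ^ 2 := by
    rw [mul_pow, Real.sq_sqrt (by positivity : (0:ℝ) ≤ n)]
    ring
  calc ∑ b : Fin n → Bool, |∑ i, (if b i then (1:ℝ) else -1)|
      = Real.sqrt ((∑ b : Fin n → Bool, |∑ i, (if b i then (1:ℝ) else -1)|) ^ 2) :=
        (Real.sqrt_sq hnn).symm
    _ ≤ Real.sqrt ((Real.sqrt n * 2 ^ n) ^ 2) := Real.sqrt_le_sqrt (key ▸ cs)
    _ = Real.sqrt n * 2 ^ n := Real.sqrt_sq (by positivity)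
end StmtAux
theorem stmt3 {p d N : ℕ}
    (φ : ℝ → ℝ) (Lφ c : ℝ) (hL : 0 ≤ Lφ)
    (hLip : ∀ x y, |φ x - φ y| ≤ Lφ * |x - y|) (hc : φ 0 = c)
    (C : Set (Matrix (Fin p) (Fin d) ℝ)) (hC : C.Nonempty)
    (f : Matrix (Fin p) (Fin d) ℝ → Fin p → ℝ) (B : ℝ)
    (hB : ∀ W ∈ C, ∑ m, |f W m| ≤ B)
    (z : Fin N → Fin d → ℝ) (RS : Set (Fin d → ℝ))
    (hRS : RS = insert 0 {w | ∃ W ∈ C, ∃ j, W j = w})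
    (hbdd1 : ∀ s : Fin N → ℝ,
      BddAbove ((fun W => (1 / (N : ℝ)) * ∑ i, s i * ∑ m, f W m * φ (W.mulVec (z i) m)) '' C))
    (hbdd2 : ∀ s : Fin N → ℝ,
      BddAbove ((fun w => ∑ i, s i * ∑ q, w q * z i q) '' RS)) :
    expSign N (fun s =>
        sSup ((fun W => (1 / (N : ℝ)) * ∑ i, s i * ∑ m, f W m * φ (W.mulVec (z i) m)) '' C))
      ≤ (2 * B * Lφ / N) *
          expSign N (fun s => sSup ((fun w => ∑ i, s i * ∑ q, w q * z i q) '' RS))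
        + B * |c| / Real.sqrt N := by
  classical
  have h0RS : (0 : Fin d → ℝ) ∈ RS := by rw [hRS]; exact Set.mem_insert _ _
  haveI : Nonempty RS := ⟨⟨0, h0RS⟩⟩
  obtain ⟨W0, hW0⟩ := hC
  have hB0 : 0 ≤ B := le_trans (Finset.sum_nonneg fun m _ => abs_nonneg _) (hB W0 hW0)
  set ψ : ℝ → ℝ := fun x => φ x - c with hψdef
  have hψ0 : ψ 0 = 0 := by simp [hψdef, hc]
  have hψlip : ∀ x y, |ψ x - ψ y| ≤ Lφ * |x - y| := by
    intro x y
    have : ψ x - ψ y = φ x - φ y := by simp only [hψdef]; ring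
    rw [this]; exact hLip x y
  have hψabs : ∀ x, |ψ x| ≤ Lφ * |x| := fun x => by simpa [hψ0] using hψlip x 0
  set g : Fin N → RS → ℝ := fun i w => ∑ q, (w : Fin d → ℝ) q * z i q with hgdef
  have hg0 : ∀ i, g i ⟨0, h0RS⟩ = 0 := by intro i; simp [hgdef]
  have hbdd2' : ∀ s : Fin N → ℝ, ∃ M, ∀ w : RS, ∑ i, s i * g i w ≤ M := by
    intro s
    obtain ⟨M, hM⟩ := hbdd2 s
    exact ⟨M, fun w => hM (Set.mem_image_of_mem _ w.2)⟩
  obtain ⟨M0, hM0⟩ : ∃ M0, ∀ w : RS, ∑ i, Lφ * |g i w| ≤ M0 := by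
    choose M hM using fun η : Fin N → Bool => hbdd2' (fun i => Lφ * (if η i then 1 else -1))
    refine ⟨∑ η : Fin N → Bool, max (M η) 0, fun w => ?_⟩
    set η : Fin N → Bool := fun i => decide (0 ≤ g i w) with hη
    have heq : ∑ i, Lφ * |g i w| = ∑ i, (Lφ * (if η i then 1 else -1)) * g i w := by
      apply Finset.sum_congr rfl
      intro i _
      by_cases hgi : 0 ≤ g i w
      · have hηi : η i = true := by simp [hη, hgi]
        rw [hηi, abs_of_nonneg hgi]
        norm_num
      · have hηi : η i = false := by simp [hη, hgi]
        rw [hηi, abs_of_neg (lt_of_not_ge hgi)]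
        norm_num
    rw [heq]
    calc ∑ i, (Lφ * (if η i then 1 else -1)) * g i w ≤ M η := hM η w
      _ ≤ max (M η) 0 := le_max_left _ _
      _ ≤ ∑ η' : Fin N → Bool, max (M η') 0 :=
          Finset.single_le_sum (fun η' _ => le_max_right (M η') 0) (Finset.mem_univ η)
  have hbddgen : ∀ (u : Fin N → RS → ℝ), (∀ i w, |u i w| ≤ Lφ * |g i w|) →
      ∀ b : Fin N → Bool,
        BddAbove (Set.range fun w : RS => ∑ i, (if b i then (1:ℝ) else -1) * u i w) := by
    intro u hu b
    refine ⟨M0, ?_⟩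
    rintro x ⟨w, rfl⟩
    calc ∑ i, (if b i then (1:ℝ) else -1) * u i w
        ≤ ∑ i, Lφ * |g i w| := by
          apply Finset.sum_le_sum
          intro i _
          have h1 : (if b i then (1:ℝ) else -1) * u i w ≤ |u i w| := by
            by_cases hb : b i
            · simpa [hb] using le_abs_self (u i w)
            · simpa [hb] using neg_le_abs (u i w)
          exact h1.trans (hu i w)
      _ ≤ M0 := hM0 w
  -- interpolation chain (Talagrand contraction)
  set U : ℕ → Fin N → RS → ℝ := fun k i w => if (i : ℕ) < k then Lφ * g i w else ψ (g i w)
    with hUdef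
  have hUabs : ∀ k i (w : RS), |U k i w| ≤ Lφ * |g i w| := by
    intro k i w
    by_cases h : (i : ℕ) < k
    · simp [hUdef, h, abs_mul, abs_of_nonneg hL]
    · simpa [hUdef, h] using hψabs (g i w)
  have hbddU : ∀ k (b : Fin N → Bool),
      BddAbove (Set.range fun w : RS => ∑ i, (if b i then (1:ℝ) else -1) * U k i w) :=
    fun k => hbddgen (U k) (hUabs k)
  have hchain : ∀ k, expSign N (fun s => sSup (Set.range fun w : RS => ∑ i, s i * U 0 i w))
      ≤ expSign N (fun s => sSup (Set.range fun w : RS => ∑ i, s i * U k i w)) := by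
    intro k
    induction k with
    | zero => exact le_refl _
    | succ k ih =>
      refine ih.trans ?_
      by_cases hk : k < N
      · refine StmtAux.exp_step (U k) (U (k+1)) ⟨k, hk⟩ Lφ (g ⟨k, hk⟩) ?_ ?_ ?_ (hbddU (k+1))
        · intro i hik
          funext w
          have hik' : (i : ℕ) ≠ k := fun h => hik (Fin.ext h)
          by_cases h : (i : ℕ) < k
          · simp [hUdef, h, Nat.lt_succ_of_lt h]
          · have h2 : ¬ (i : ℕ) < k + 1 :=
              fun hlt => (Nat.lt_succ_iff_lt_or_eq.mp hlt).elim h hik'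
            simp [hUdef, h, h2]
        · intro x y
          have hx : U k ⟨k, hk⟩ x = ψ (g ⟨k, hk⟩ x) := by simp [hUdef]
          have hy : U k ⟨k, hk⟩ y = ψ (g ⟨k, hk⟩ y) := by simp [hUdef]
          rw [hx, hy]
          exact hψlip _ _
        · intro w; simp [hUdef]
      · have huu : ∀ i : Fin N, U k i = U (k+1) i := by
          intro i
          funext w
          have h1 : (i : ℕ) < k := lt_of_lt_of_le i.isLt (le_of_not_gt hk)
          simp [hUdef, h1, Nat.lt_succ_of_lt h1]
        have he : (fun s : Fin N → ℝ => sSup (Set.range fun w : RS => ∑ i, s i * U k i w))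
            = fun s => sSup (Set.range fun w : RS => ∑ i, s i * U (k+1) i w) := by
          funext s
          exact congrArg (fun F : RS → ℝ => sSup (Set.range F))
            (funext fun w => Finset.sum_congr rfl fun i _ => by rw [huu i])
        rw [he]
  have hbddg : ∀ b : Fin N → Bool,
      BddAbove (Set.range fun w : RS => ∑ i, (if b i then (1:ℝ) else -1) * g i w) := by
    intro b
    obtain ⟨M, hM⟩ := hbdd2' (fun i => if b i then (1:ℝ) else -1)
    exact ⟨M, by rintro x ⟨w, rfl⟩; exact hM w⟩
  have hVnn : ∀ b : Fin N → Bool,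
      0 ≤ sSup (Set.range fun w : RS => ∑ i, (if b i then (1:ℝ) else -1) * g i w) := by
    intro b
    have h := le_csSup (hbddg b) (Set.mem_range_self (⟨0, h0RS⟩ : RS))
    simpa [hg0] using h
  have hlast : expSign N (fun s => sSup (Set.range fun w : RS => ∑ i, s i * U N i w))
      ≤ Lφ * expSign N (fun s => sSup (Set.range fun w : RS => ∑ i, s i * g i w)) := by
    rw [← StmtAux.expSign_const_mul]
    apply StmtAux.expSign_mono
    intro b
    have heq : (fun w : RS => ∑ i, (if b i then (1:ℝ) else -1) * U N i w)
        = fun w => Lφ * ∑ i, (if b i then (1:ℝ) else -1) * g i w := by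
      funext w
      rw [Finset.mul_sum]
      apply Finset.sum_congr rfl
      intro i _
      have hi : (i : ℕ) < N := i.isLt
      simp only [hUdef, if_pos hi]
      ring
    rw [congrArg (fun F : RS → ℝ => sSup (Set.range F)) heq]
    apply csSup_le (Set.range_nonempty _)
    rintro x ⟨w, rfl⟩
    exact mul_le_mul_of_nonneg_left (le_csSup (hbddg b) (Set.mem_range_self w)) hL
  -- ψ-functional facts
  have hU0 : ∀ s : Fin N → ℝ, (fun w : RS => ∑ i, s i * U 0 i w)
      = fun w => ∑ i, s i * ψ (g i w) := by
    intro s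
    funext w
    exact Finset.sum_congr rfl fun i _ => by simp [hUdef]
  have hbddψ : ∀ b : Fin N → Bool,
      BddAbove (Set.range fun w : RS => ∑ i, (if b i then (1:ℝ) else -1) * ψ (g i w)) := by
    intro b
    have h := hbddU 0 b
    rwa [congrArg Set.range (hU0 _)] at h
  have hψnn : ∀ b : Fin N → Bool,
      0 ≤ sSup (Set.range fun w : RS => ∑ i, (if b i then (1:ℝ) else -1) * ψ (g i w)) := by
    intro b
    have h := le_csSup (hbddψ b) (Set.mem_range_self (⟨0, h0RS⟩ : RS))
    simpa [hg0, hψ0] using h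
  have hφabs : ∀ x, |φ x| ≤ Lφ * |x| + |c| := by
    intro x
    have h1 : φ x = ψ x + c := by simp [hψdef]
    rw [h1]
    exact (abs_add_le _ _).trans (add_le_add_left (hψabs x) _)
  have hbddS : ∀ b : Fin N → Bool,
      BddAbove (Set.range fun w : RS => |∑ i, (if b i then (1:ℝ) else -1) * φ (g i w)|) := by
    intro b
    refine ⟨M0 + N * |c|, ?_⟩
    rintro x ⟨w, rfl⟩
    calc |∑ i, (if b i then (1:ℝ) else -1) * φ (g i w)|
        ≤ ∑ i, |(if b i then (1:ℝ) else -1) * φ (g i w)| := Finset.abs_sum_le_sum_abs _ _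
      _ ≤ ∑ i, (Lφ * |g i w| + |c|) := by
          apply Finset.sum_le_sum
          intro i _
          rw [abs_mul]
          have h1 : |if b i then (1:ℝ) else -1| = 1 := by by_cases hb : b i <;> simp [hb]
          rw [h1, one_mul]
          exact hφabs _
      _ = (∑ i, Lφ * |g i w|) + N * |c| := by
          rw [Finset.sum_add_distrib, Finset.sum_const, Finset.card_univ]
          simp [nsmul_eq_mul]
      _ ≤ M0 + N * |c| := add_le_add_left (hM0 w) _
  -- Step 1 : peel off the outer layer
  have hstep1 : ∀ b : Fin N → Bool,
      sSup ((fun W => (1 / (N : ℝ)) *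
          ∑ i, (if b i then (1:ℝ) else -1) * ∑ m, f W m * φ (W.mulVec (z i) m)) '' C)
      ≤ (1 / (N : ℝ)) * B *
          sSup (Set.range fun w : RS => |∑ i, (if b i then (1:ℝ) else -1) * φ (g i w)|) := by
    intro b
    have hSnn : 0 ≤ sSup (Set.range fun w : RS =>
        |∑ i, (if b i then (1:ℝ) else -1) * φ (g i w)|) :=
      le_trans (abs_nonneg _) (le_csSup (hbddS b) (Set.mem_range_self (⟨0, h0RS⟩ : RS)))
    apply csSup_le (Set.Nonempty.image _ ⟨W0, hW0⟩)
    rintro x ⟨W, hW, rfl⟩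
    have hrow : ∀ m, W m ∈ RS := fun m => by
      rw [hRS]; exact Set.mem_insert_iff.mpr (Or.inr ⟨W, hW, m, rfl⟩)
    have hmv : ∀ (i : Fin N) (m : Fin p), W.mulVec (z i) m = g i ⟨W m, hrow m⟩ := by
      intro i m
      simp [Matrix.mulVec, dotProduct, hgdef]
    have hswap : ∑ i, (if b i then (1:ℝ) else -1) * ∑ m, f W m * φ (W.mulVec (z i) m)
        = ∑ m, f W m * ∑ i, (if b i then (1:ℝ) else -1) * φ (g i ⟨W m, hrow m⟩) := by
      simp_rw [Finset.mul_sum]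
      rw [Finset.sum_comm]
      apply Finset.sum_congr rfl
      intro m _
      apply Finset.sum_congr rfl
      intro i _
      rw [hmv i m]
      ring
    have hterm : ∀ m, f W m * ∑ i, (if b i then (1:ℝ) else -1) * φ (g i ⟨W m, hrow m⟩)
        ≤ |f W m| * sSup (Set.range fun w : RS =>
            |∑ i, (if b i then (1:ℝ) else -1) * φ (g i w)|) := by
      intro m
      have h1 : |∑ i, (if b i then (1:ℝ) else -1) * φ (g i ⟨W m, hrow m⟩)|
          ≤ sSup (Set.range fun w : RS => |∑ i, (if b i then (1:ℝ) else -1) * φ (g i w)|) :=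
        le_csSup (hbddS b) (Set.mem_range_self _)
      calc f W m * ∑ i, (if b i then (1:ℝ) else -1) * φ (g i ⟨W m, hrow m⟩)
          ≤ |f W m * ∑ i, (if b i then (1:ℝ) else -1) * φ (g i ⟨W m, hrow m⟩)| := le_abs_self _
        _ = |f W m| * |∑ i, (if b i then (1:ℝ) else -1) * φ (g i ⟨W m, hrow m⟩)| := abs_mul _ _
        _ ≤ |f W m| * _ := mul_le_mul_of_nonneg_left h1 (abs_nonneg _)
    calc (1 / (N : ℝ)) * ∑ i, (if b i then (1:ℝ) else -1) * ∑ m, f W m * φ (W.mulVec (z i) m)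
        = (1 / (N : ℝ)) * ∑ m, f W m *
            ∑ i, (if b i then (1:ℝ) else -1) * φ (g i ⟨W m, hrow m⟩) := by rw [hswap]
      _ ≤ (1 / (N : ℝ)) * (B * sSup (Set.range fun w : RS =>
            |∑ i, (if b i then (1:ℝ) else -1) * φ (g i w)|)) := by
          apply mul_le_mul_of_nonneg_left _ (by positivity)
          calc ∑ m, f W m * ∑ i, (if b i then (1:ℝ) else -1) * φ (g i ⟨W m, hrow m⟩)
              ≤ ∑ m, |f W m| * sSup (Set.range fun w : RS =>
                  |∑ i, (if b i then (1:ℝ) else -1) * φ (g i w)|) :=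
                Finset.sum_le_sum fun m _ => hterm m
            _ = (∑ m, |f W m|) * sSup (Set.range fun w : RS =>
                  |∑ i, (if b i then (1:ℝ) else -1) * φ (g i w)|) := (Finset.sum_mul _ _ _).symm
            _ ≤ B * _ := mul_le_mul_of_nonneg_right (hB W hW) hSnn
      _ = (1 / (N : ℝ)) * B * sSup (Set.range fun w : RS =>
            |∑ i, (if b i then (1:ℝ) else -1) * φ (g i w)|) := by ring
  -- Step 2 : remove the absolute value
  have hstep2 : ∀ b : Fin N → Bool,
      sSup (Set.range fun w : RS => |∑ i, (if b i then (1:ℝ) else -1) * φ (g i w)|)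
      ≤ sSup (Set.range fun w : RS => ∑ i, (if b i then (1:ℝ) else -1) * ψ (g i w))
        + sSup (Set.range fun w : RS => ∑ i, -(if b i then (1:ℝ) else -1) * ψ (g i w))
        + |c| * |∑ i, (if b i then (1:ℝ) else -1)| := by
    intro b
    have hnegeq : (fun w : RS => ∑ i, -(if b i then (1:ℝ) else -1) * ψ (g i w))
        = fun w => ∑ i, (if !(b i) then (1:ℝ) else -1) * ψ (g i w) := by
      funext w
      apply Finset.sum_congr rfl
      intro i _
      by_cases hb : b i <;> simp [hb]
    have hbddneg : BddAbove (Set.range fun w : RS =>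
        ∑ i, -(if b i then (1:ℝ) else -1) * ψ (g i w)) := by
      rw [congrArg Set.range hnegeq]; exact hbddψ (fun i => !(b i))
    have hnegnn : 0 ≤ sSup (Set.range fun w : RS =>
        ∑ i, -(if b i then (1:ℝ) else -1) * ψ (g i w)) := by
      rw [congrArg Set.range hnegeq]; exact hψnn (fun i => !(b i))
    have hposnn := hψnn b
    apply csSup_le (Set.range_nonempty _)
    rintro x ⟨w, rfl⟩
    beta_reduce
    have hdecomp : ∑ i, (if b i then (1:ℝ) else -1) * φ (g i w)
        = (∑ i, (if b i then (1:ℝ) else -1) * ψ (g i w))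
          + (∑ i, (if b i then (1:ℝ) else -1)) * c := by
      rw [Finset.sum_mul, ← Finset.sum_add_distrib]
      apply Finset.sum_congr rfl
      intro i _
      simp only [hψdef]
      split_ifs <;> ring
    have h1 : ∑ i, (if b i then (1:ℝ) else -1) * ψ (g i w)
        ≤ sSup (Set.range fun w : RS => ∑ i, (if b i then (1:ℝ) else -1) * ψ (g i w)) :=
      le_csSup (hbddψ b) (Set.mem_range_self w)
    have h2 : ∑ i, -(if b i then (1:ℝ) else -1) * ψ (g i w)
        ≤ sSup (Set.range fun w : RS => ∑ i, -(if b i then (1:ℝ) else -1) * ψ (g i w)) :=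
      le_csSup hbddneg (Set.mem_range_self w)
    have h2' : -(∑ i, (if b i then (1:ℝ) else -1) * ψ (g i w))
        ≤ sSup (Set.range fun w : RS => ∑ i, -(if b i then (1:ℝ) else -1) * ψ (g i w)) := by
      have hne : -(∑ i, (if b i then (1:ℝ) else -1) * ψ (g i w))
          = ∑ i, -(if b i then (1:ℝ) else -1) * ψ (g i w) := by
        rw [← Finset.sum_neg_distrib]
        apply Finset.sum_congr rfl
        intro i _
        ring
      rw [hne]; exact h2
    rw [hdecomp]
    have habsX : |∑ i, (if b i then (1:ℝ) else -1) * ψ (g i w)|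
        ≤ sSup (Set.range fun w : RS => ∑ i, (if b i then (1:ℝ) else -1) * ψ (g i w))
          + sSup (Set.range fun w : RS => ∑ i, -(if b i then (1:ℝ) else -1) * ψ (g i w)) :=
      abs_le.mpr ⟨by linarith, by linarith⟩
    calc |(∑ i, (if b i then (1:ℝ) else -1) * ψ (g i w))
          + (∑ i, (if b i then (1:ℝ) else -1)) * c|
        ≤ |∑ i, (if b i then (1:ℝ) else -1) * ψ (g i w)|
          + |(∑ i, (if b i then (1:ℝ) else -1)) * c| := abs_add_le _ _
      _ = |∑ i, (if b i then (1:ℝ) else -1) * ψ (g i w)|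
          + |c| * |∑ i, (if b i then (1:ℝ) else -1)| := by rw [abs_mul]; ring
      _ ≤ _ := by
          have := habsX
          linarith
  -- put the expectations together
  have hES : expSign N (fun s => sSup (Set.range fun w : RS => |∑ i, s i * φ (g i w)|))
      ≤ 2 * expSign N (fun s => sSup (Set.range fun w : RS => ∑ i, s i * ψ (g i w)))
        + |c| * expSign N (fun s => |∑ i, s i|) := by
    have hm : expSign N (fun s => sSup (Set.range fun w : RS => |∑ i, s i * φ (g i w)|))
        ≤ expSign N (fun s =>
            sSup (Set.range fun w : RS => ∑ i, s i * ψ (g i w))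
            + sSup (Set.range fun w : RS => ∑ i, -(s i) * ψ (g i w))
            + |c| * |∑ i, s i|) :=
      StmtAux.expSign_mono fun b => hstep2 b
    refine hm.trans ?_
    rw [StmtAux.expSign_add (fun s =>
        sSup (Set.range fun w : RS => ∑ i, s i * ψ (g i w))
        + sSup (Set.range fun w : RS => ∑ i, -(s i) * ψ (g i w)))
      (fun s => |c| * |∑ i, s i|)]
    rw [StmtAux.expSign_add (fun s => sSup (Set.range fun w : RS => ∑ i, s i * ψ (g i w)))
      (fun s => sSup (Set.range fun w : RS => ∑ i, -(s i) * ψ (g i w)))]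
    rw [StmtAux.expSign_const_mul |c| (fun s => |∑ i, s i|)]
    have hneg : expSign N (fun s => sSup (Set.range fun w : RS => ∑ i, -(s i) * ψ (g i w)))
        = expSign N (fun s => sSup (Set.range fun w : RS => ∑ i, s i * ψ (g i w))) :=
      StmtAux.expSign_neg_comp (fun s => sSup (Set.range fun w : RS => ∑ i, s i * ψ (g i w)))
    rw [hneg]
    apply le_of_eq
    ring
  -- contraction conclusion
  have hcontr : expSign N (fun s => sSup (Set.range fun w : RS => ∑ i, s i * ψ (g i w)))
      ≤ Lφ * expSign N (fun s => sSup (Set.range fun w : RS => ∑ i, s i * g i w)) := by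
    have h0 : (fun s : Fin N → ℝ => sSup (Set.range fun w : RS => ∑ i, s i * ψ (g i w)))
        = fun s => sSup (Set.range fun w : RS => ∑ i, s i * U 0 i w) := by
      funext s
      exact (congrArg (fun F : RS → ℝ => sSup (Set.range F)) (hU0 s)).symm
    rw [h0]
    exact (hchain N).trans hlast
  -- the V-expectation is nonnegative, and rewrite image to range
  have hVimg : (fun s : Fin N → ℝ => sSup ((fun w => ∑ i, s i * ∑ q, w q * z i q) '' RS))
      = fun s => sSup (Set.range fun w : RS => ∑ i, s i * g i w) := by
    funext s
    rw [Set.image_eq_range]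
  have hEVnn : 0 ≤ expSign N (fun s => sSup (Set.range fun w : RS => ∑ i, s i * g i w)) := by
    have h := StmtAux.expSign_mono (n := N)
      (F := fun _ => (0:ℝ))
      (G := fun s => sSup (Set.range fun w : RS => ∑ i, s i * g i w))
      (fun b => hVnn b)
    rwa [StmtAux.expSign_const 0] at h
  -- final assembly
  rw [hVimg]
  set EV := expSign N (fun s => sSup (Set.range fun w : RS => ∑ i, s i * g i w)) with hEVdef
  set EU := expSign N (fun s => sSup (Set.range fun w : RS => ∑ i, s i * ψ (g i w))) with hEUdef
  set ES := expSign N (fun s => sSup (Set.range fun w : RS => |∑ i, s i * φ (g i w)|)) with hESdef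
  have hmain : expSign N (fun s =>
      sSup ((fun W => (1 / (N : ℝ)) * ∑ i, s i * ∑ m, f W m * φ (W.mulVec (z i) m)) '' C))
      ≤ (1 / (N : ℝ)) * B * ES := by
    have hm : expSign N (fun s =>
        sSup ((fun W => (1 / (N : ℝ)) * ∑ i, s i * ∑ m, f W m * φ (W.mulVec (z i) m)) '' C))
        ≤ expSign N (fun s => (1 / (N : ℝ)) * B *
            sSup (Set.range fun w : RS => |∑ i, s i * φ (g i w)|)) :=
      StmtAux.expSign_mono fun b => hstep1 b
    refine hm.trans ?_
    rw [StmtAux.expSign_const_mul ((1 / (N : ℝ)) * B)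
      (fun s => sSup (Set.range fun w : RS => |∑ i, s i * φ (g i w)|))]
  have hEA : expSign N (fun s => |∑ i, s i|) ≤ Real.sqrt N := StmtAux.expSign_abs_sum_le N
  have hES2 : ES ≤ 2 * (Lφ * EV) + |c| * Real.sqrt N := by
    refine hES.trans ?_
    have h1 : 2 * EU ≤ 2 * (Lφ * EV) := by linarith [hcontr]
    have h2 : |c| * expSign N (fun s => |∑ i, s i|) ≤ |c| * Real.sqrt N :=
      mul_le_mul_of_nonneg_left hEA (abs_nonneg c)
    linarith
  have htail : (1 / (N : ℝ)) * B * (2 * (Lφ * EV) + |c| * Real.sqrt N)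
      ≤ 2 * B * Lφ / N * EV + B * |c| / Real.sqrt N := by
    have hsplit : (1 / (N : ℝ)) * B * (2 * (Lφ * EV) + |c| * Real.sqrt N)
        = 2 * B * Lφ / N * EV + B * |c| * Real.sqrt N / N := by ring
    rw [hsplit]
    apply add_le_add_right
    rcases Nat.eq_zero_or_pos N with hN | hN
    · subst hN
      simp
    · have hNpos : (0 : ℝ) < N := by exact_mod_cast hN
      have hsq : Real.sqrt N * Real.sqrt N = (N : ℝ) := Real.mul_self_sqrt hNpos.le
      have hsp : 0 < Real.sqrt N := Real.sqrt_pos.mpr hNpos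
      rw [div_le_div_iff₀ hNpos hsp]
      apply le_of_eq
      calc B * |c| * Real.sqrt N * Real.sqrt N
          = B * |c| * (Real.sqrt N * Real.sqrt N) := by ring
        _ = B * |c| * N := by rw [hsq]
  calc expSign N (fun s =>
      sSup ((fun W => (1 / (N : ℝ)) * ∑ i, s i * ∑ m, f W m * φ (W.mulVec (z i) m)) '' C))
      ≤ (1 / (N : ℝ)) * B * ES := hmain
    _ ≤ (1 / (N : ℝ)) * B * (2 * (Lφ * EV) + |c| * Real.sqrt N) := by
        apply mul_le_mul_of_nonneg_left hES2 (by positivity)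
    _ ≤ 2 * B * Lφ / N * EV + B * |c| / Real.sqrt N := htail
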